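/- Let A be a commutative ring, let S = A[t_1,...,t_n] be the polynomial ring, and let F = S^m be the free S-module of rank m with standard basis e_1,...,e_m. Let R ⊆ F be an S-submodule and let β be a finite set of pairs (s, i), with s an exponent vector in ℕⁿ and i ∈ {1,...,m}, such that for each i the set {s : (s,i) ∈ β} is downward closed under the componentwise order, and such that F/R is a free A-module for which the images of the monomial elements t^s · e_i, (s,i) ∈ β, form an A-module basis. Let d(β) be the maximal total degree of the exponent vectors occurring in β. Then R is generated, as an S-module, by its elements all of whose nonzero coordinate polynomials have total degree at most d(β) + 1. -/

import Mathlib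

open MvPolynomial


/-- Let `R ⊆ F = S^m` be a submodule over `S = A[t_1,...,t_n]` and `β`
a finite set of pairs (exponent vector, coordinate), downward closed in each
coordinate, whose monomial elements `t^s·e_i` map to an `A`-basis of the free
`A`-module `F/R`. Then `R` is generated as an `S`-module by its elements all of
whose coordinate polynomials have total degree at most `d(β) + 1`. -/
theorem stmt4 {A : Type*} [CommRing A] {n m : ℕ}
    (R : Submodule (MvPolynomial (Fin n) A) (Fin m → MvPolynomial (Fin n) A))
    (β : Finset ((Fin n →₀ ℕ) × Fin m))
    (hdc : ∀ p ∈ β, ∀ t : Fin n →₀ ℕ, t ≤ p.1 → (t, p.2) ∈ β)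
    (b : Module.Basis β A ((Fin m → MvPolynomial (Fin n) A) ⧸ R))
    (hb : ∀ p : β, b p = Submodule.Quotient.mk (p := R)
      (Pi.single p.1.2 (MvPolynomial.monomial p.1.1 (1 : A)))) :
    R = Submodule.span (MvPolynomial (Fin n) A)
      {f : Fin m → MvPolynomial (Fin n) A |
        f ∈ R ∧ ∀ j, (f j).totalDegree ≤ β.sup (fun p => ∑ i, p.1 i) + 1} := by
  classical
  set S := MvPolynomial (Fin n) A with hS
  set d := β.sup (fun p => ∑ i, p.1 i) with hd
  set G : Set (Fin m → S) := {f | f ∈ R ∧ ∀ j, (f j).totalDegree ≤ d + 1} with hG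
  set P := Submodule.span S G with hP
  -- monomial elements
  set mono : β → (Fin m → S) := fun p => Pi.single p.1.2 (monomial p.1.1 (1 : A)) with hmono
  -- the A-linear "normal form" map
  set ν : ((Fin m → S) ⧸ R) →ₗ[A] (Fin m → S) :=
    (Finsupp.linearCombination A mono) ∘ₗ (b.repr : ((Fin m → S) ⧸ R) →ₗ[A] (β →₀ A)) with hν
  set Nb : (Fin m → S) →ₗ[A] (Fin m → S) := ν ∘ₗ (R.mkQ.restrictScalars A) with hNb
  have hNb_apply : ∀ f, Nb f = ν (R.mkQ f) := fun f => rfl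
  -- Nb depends only on the class mod R
  have hNbπ : ∀ f g : Fin m → S, R.mkQ f = R.mkQ g → Nb f = Nb g := by
    intro f g h; rw [hNb_apply, hNb_apply, h]
  -- mkQ ∘ Nb = mkQ
  have hmk : ∀ f : Fin m → S, R.mkQ (Nb f) = R.mkQ f := by
    intro f
    rw [hNb_apply]
    have : R.mkQ (ν (R.mkQ f)) = (R.mkQ.restrictScalars A) (ν (R.mkQ f)) := rfl
    rw [this, hν]
    simp only [LinearMap.comp_apply]
    rw [Finsupp.apply_linearCombination]
    have he : (R.mkQ.restrictScalars A) ∘ mono = ⇑b := by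
      funext p
      rw [hb p]
      rfl
    rw [he]
    exact b.linearCombination_repr _
  -- f - Nb f ∈ R
  have hsub : ∀ f : Fin m → S, f - Nb f ∈ R := by
    intro f
    exact (Submodule.Quotient.eq R).1 (hmk f).symm
  -- Nb vanishes on R
  have hzero : ∀ f ∈ R, Nb f = 0 := by
    intro f hf
    rw [hNb_apply]
    have : R.mkQ f = 0 := (Submodule.Quotient.mk_eq_zero R).2 hf
    rw [this, map_zero]
  -- degree bound on Nb f
  have hdeg : ∀ (f : Fin m → S) (j : Fin m), ((Nb f) j).totalDegree ≤ d := by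
    intro f j
    rw [hNb_apply, hν]
    simp only [LinearMap.comp_apply]
    rw [Finsupp.linearCombination_apply, Finsupp.sum]
    rw [Finset.sum_apply]
    refine (totalDegree_finset_sum _ _).trans (Finset.sup_le ?_)
    intro p _
    simp only [Pi.smul_apply]
    refine (totalDegree_smul_le _ _).trans ?_
    rw [hmono]
    by_cases hji : j = p.1.2
    · subst hji
      simp only [Pi.single_eq_same]
      refine (totalDegree_monomial_le _ _).trans ?_
      have : (p.1.1.sum fun _ e => e) = ∑ i, p.1.1 i := Finsupp.sum_fintype _ _ (fun _ => rfl)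
      exact le_trans (le_of_eq this) (Finset.le_sup (f := fun q => ∑ i, q.1 i) p.2)
    · simp only [Pi.single_eq_of_ne hji]
      simp
  -- small elements
  have hsmall : ∀ f : Fin m → S, (∀ j, (f j).totalDegree ≤ d + 1) → f - Nb f ∈ P := by
    intro f hf
    refine Submodule.subset_span ⟨hsub f, fun j => ?_⟩
    rw [Pi.sub_apply]
    exact (totalDegree_sub _ _).trans (max_le (hf j) ((hdeg f j).trans (Nat.le_succ d)))
  -- degree of a monomial element
  have hmdeg : ∀ (u : Fin n →₀ ℕ) (i j : Fin m),
      ((Pi.single i (monomial u (1 : A)) : Fin m → S) j).totalDegree ≤ ∑ i, u i := by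
    intro u i j
    by_cases hji : j = i
    · subst hji
      simp only [Pi.single_eq_same]
      refine (totalDegree_monomial_le _ _).trans ?_
      exact le_of_eq (Finsupp.sum_fintype _ _ (fun _ => rfl))
    · rw [Pi.single_eq_of_ne hji]; simp
  -- key induction on total degree
  have key : ∀ N : ℕ, ∀ u : Fin n →₀ ℕ, (∑ i, u i) ≤ N → ∀ i : Fin m,
      Pi.single i (monomial u (1 : A)) - Nb (Pi.single i (monomial u (1 : A))) ∈ P := by
    intro N
    induction N with
    | zero =>
      intro u hu i
      exact hsmall _ (fun j => (hmdeg u i j).trans (by omega))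
    | succ N ih =>
      intro u hu i
      by_cases hc : (∑ i, u i) ≤ d + 1
      · exact hsmall _ (fun j => (hmdeg u i j).trans hc)
      · push_neg at hc
        obtain ⟨k, _, hk⟩ : ∃ k ∈ Finset.univ, u k ≠ 0 :=
          Finset.exists_ne_zero_of_sum_ne_zero (by omega)
        set u' := u - Finsupp.single k 1 with hu'def
        have hle : Finsupp.single k 1 ≤ u := by
          rw [Finsupp.single_le_iff]; omega
        have hu' : u' + Finsupp.single k 1 = u := tsub_add_cancel_of_le hle
        have hsum : (∑ i, u' i) + 1 = ∑ i, u i := by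
          have h1 : ∑ i, u i = (∑ i, u' i) + ∑ i, (Finsupp.single k 1 : Fin n →₀ ℕ) i := by
            rw [← Finset.sum_add_distrib]
            exact Finset.sum_congr rfl (fun i _ => by rw [← hu']; rfl)
          have h2 : ∑ i, (Finsupp.single k 1 : Fin n →₀ ℕ) i = 1 := by
            simp [Finsupp.single_apply]
          omega
        have hmul : (monomial u (1 : A)) = X k * monomial u' 1 := by
          rw [X, monomial_mul, one_mul]
          congr 1
          rw [add_comm, hu']
        set m' : Fin m → S := Pi.single i (monomial u' (1 : A)) with hm'
        have hm : (Pi.single i (monomial u (1 : A)) : Fin m → S) = (X k : S) • m' := by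
          funext j
          by_cases hji : j = i
          · subst hji
            rw [Pi.smul_apply, hm', Pi.single_eq_same, Pi.single_eq_same, smul_eq_mul, hmul]
          · rw [Pi.smul_apply, hm', Pi.single_eq_of_ne hji, Pi.single_eq_of_ne hji, smul_zero]
        have h1 : m' - Nb m' ∈ P := ih u' (by omega) i
        have h1R : m' - Nb m' ∈ R := hsub m'
        set g : Fin m → S := (X k : S) • Nb m' with hg
        have hgdeg : ∀ j, (g j).totalDegree ≤ d + 1 := by
          intro j
          have : g j = X k * (Nb m') j := rfl
          rw [this]
          refine (totalDegree_mul _ _).trans ?_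
          have hX : (X k : S).totalDegree ≤ 1 := by
            rw [X]
            refine (totalDegree_monomial_le _ _).trans ?_
            simp [Finsupp.sum_single_index]
          have := hdeg m' j
          omega
        have h2 : g - Nb g ∈ P := hsmall g hgdeg
        have hNg : Nb g = Nb (Pi.single i (monomial u (1 : A))) := by
          apply hNbπ
          rw [Submodule.mkQ_apply, Submodule.mkQ_apply, Submodule.Quotient.eq]
          have : g - (Pi.single i (monomial u (1 : A)) : Fin m → S)
              = -((X k : S) • (m' - Nb m')) := by
            rw [hm, hg, smul_sub]; abel
          rw [this]
          exact R.neg_mem (R.smul_mem _ h1R)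
        have heq : (Pi.single i (monomial u (1 : A)) : Fin m → S)
            - Nb (Pi.single i (monomial u (1 : A)))
            = (X k : S) • (m' - Nb m') + (g - Nb g) := by
          rw [← hNg, hm, hg, smul_sub]; abel
        rw [heq]
        exact P.add_mem (P.smul_mem _ h1) h2
  -- every f - Nb f lies in P
  have main : ∀ f : Fin m → S, f - Nb f ∈ P := by
    intro f
    have hf : f ∈ Submodule.span A
        (Set.range (Pi.basis fun _ : Fin m => basisMonomials (Fin n) A)) := by
      rw [Module.Basis.span_eq]; trivial
    refine Submodule.span_induction ?_ ?_ ?_ ?_ hf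
    · rintro x ⟨⟨i, u⟩, rfl⟩
      rw [Pi.basis_apply]
      have : (basisMonomials (Fin n) A) u = monomial u (1 : A) := by
        simp [coe_basisMonomials]
      rw [this]
      exact key (∑ i, u i) u le_rfl i
    · simp
    · intro x y _ _ hx hy
      have : (x + y) - Nb (x + y) = (x - Nb x) + (y - Nb y) := by
        rw [map_add]; abel
      rw [this]; exact P.add_mem hx hy
    · intro a x _ hx
      have : a • x - Nb (a • x) = a • (x - Nb x) := by
        rw [map_smul, smul_sub]
      rw [this]
      exact (Submodule.restrictScalars A P).smul_mem a hx
  refine le_antisymm ?_ (Submodule.span_le.2 (fun f hf => hf.1))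
  intro f hf
  have h := main f
  rwa [hzero f hf, sub_zero] at h
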